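/- Let G be a graph that is the join of two graphs G_1 and G_2. Then the minimum size of an edge separator of G equals the minimum degree δ(G); i.e., removing the edges incident to a minimum-degree vertex gives a minimum edge cut. -/

import Mathlib

open SimpleGraph Finset

variable {V : Type*}

/-- Boundary pairs inject into any set of edges containing all boundary edges. -/
lemma bd_card_le [Fintype V] [DecidableEq V] (G : SimpleGraph V) [DecidableRel G.Adj]
    (F : Finset (Sym2 V)) (S : Finset V)
    (hF : ∀ x y, x ∈ S → y ∉ S → G.Adj x y → s(x,y) ∈ F) :
    ((S ×ˢ Sᶜ).filter fun p : V × V => G.Adj p.1 p.2).card ≤ F.card := by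
  apply Finset.card_le_card_of_injOn (fun p => s(p.1, p.2))
  · intro p hp
    change p ∈ (S ×ˢ Sᶜ).filter (fun p : V × V => G.Adj p.1 p.2) at hp
    simp only [mem_filter, mem_product, mem_compl] at hp
    exact hF p.1 p.2 hp.1.1 hp.1.2 hp.2
  · intro p hp q hq hpq
    simp only [mem_coe, mem_filter, mem_product, mem_compl] at hp hq
    rw [Sym2.eq_iff] at hpq
    rcases hpq with ⟨h1, h2⟩ | ⟨h1, h2⟩
    · exact Prod.ext h1 h2
    · exact absurd (h1 ▸ hp.1.1 : q.2 ∈ S) hq.1.2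

lemma deg_le_bd [Fintype V] [DecidableEq V] (G : SimpleGraph V) [DecidableRel G.Adj]
    (S : Finset V) (u : V) (hu : u ∈ S)
    (hall : ∀ x ∈ S, ∃ y, y ∉ S ∧ G.Adj x y) :
    G.degree u ≤ ((S ×ˢ Sᶜ).filter fun p : V × V => G.Adj p.1 p.2).card := by
  set B := (S ×ˢ Sᶜ).filter fun p : V × V => G.Adj p.1 p.2 with hB
  have hcard : B.card = ∑ x ∈ S, (B.filter fun p => p.1 = x).card := by
    apply Finset.card_eq_sum_card_fiberwise
    intro p hp
    change p ∈ B at hp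
    simp only [hB, mem_filter, mem_product] at hp
    exact hp.1.1
  have hfib : ∀ x ∈ S, (B.filter fun p => p.1 = x).card
      = ((G.neighborFinset x).filter fun y => y ∉ S).card := by
    intro x hx
    apply Finset.card_bij (fun p _ => p.2)
    · intro p hp
      simp only [hB, mem_filter, mem_product, mem_compl] at hp
      obtain ⟨⟨⟨hp1, hp2⟩, hp3⟩, hp4⟩ := hp
      rw [hp4] at hp3
      simp only [mem_filter, mem_neighborFinset]
      exact ⟨hp3, hp2⟩
    · intro p hp q hq h
      simp only [hB, mem_filter] at hp hq
      exact Prod.ext (hp.2.trans hq.2.symm) h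
    · intro y hy
      simp only [mem_filter, mem_neighborFinset] at hy
      exact ⟨(x, y), by simp [hB, hx, hy.1, hy.2], rfl⟩
  have hdeg : G.degree u = ((G.neighborFinset u).filter fun y => y ∈ S).card
      + ((G.neighborFinset u).filter fun y => y ∉ S).card := by
    unfold SimpleGraph.degree
    rw [← Finset.card_filter_add_card_filter_not (s := G.neighborFinset u)
      (p := fun y => y ∈ S)]
  have hin : ((G.neighborFinset u).filter fun y => y ∈ S).card ≤ (S.erase u).card := by
    apply Finset.card_le_card
    intro y hy
    simp only [mem_filter, mem_neighborFinset] at hy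
    exact Finset.mem_erase.mpr ⟨(G.ne_of_adj hy.1.symm), hy.2⟩
  have hsum : ∑ x ∈ S, (B.filter fun p => p.1 = x).card
      ≥ ((G.neighborFinset u).filter fun y => y ∉ S).card + (S.erase u).card := by
    rw [← Finset.add_sum_erase S _ hu, hfib u hu]
    gcongr
    calc (S.erase u).card = ∑ _x ∈ S.erase u, 1 := by simp
    _ ≤ ∑ x ∈ S.erase u, (B.filter fun p => p.1 = x).card := by
        apply Finset.sum_le_sum
        intro x hx
        have hxS := Finset.mem_of_mem_erase hx
        rw [hfib x hxS]
        obtain ⟨y, hy1, hy2⟩ := hall x hxS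
        exact Finset.card_pos.mpr ⟨y, by simp [hy1, hy2]⟩
  omega

theorem stmt_8 [Fintype V] [Nonempty V] (G : SimpleGraph V) [DecidableRel G.Adj]
    (f : V → Bool) (h1 : ∃ v, f v = true) (h2 : ∃ v, f v = false)
    (hjoin : ∀ u v : V, f u ≠ f v → G.Adj u v) :
    IsLeast {n : ℕ | ∃ F : Finset (Sym2 V), ↑F ⊆ G.edgeSet ∧
      ¬(G.deleteEdges ↑F).Connected ∧ F.card = n} G.minDegree := by
  classical
  constructor
  · -- membership: incidence edges of a minimum degree vertex
    obtain ⟨v, hv⟩ := G.exists_minimal_degree_vertex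
    refine ⟨G.incidenceFinset v, ?_, ?_, by rw [G.card_incidenceFinset_eq_degree, hv]⟩
    · intro e he
      simp only [coe_sort_coe, Finset.mem_coe, mem_incidenceFinset] at he
      exact G.incidenceSet_subset v he
    · intro hconn
      -- v is isolated in the deleted graph
      have hiso : ∀ y, ¬ (G.deleteEdges ↑(G.incidenceFinset v)).Adj v y := by
        intro y hy
        rw [deleteEdges_adj] at hy
        exact hy.2 (by simp [mem_incidenceFinset, incidenceSet, hy.1.symm, hy.1])
      -- there is a vertex different from v
      obtain ⟨z, hz⟩ : ∃ z, z ≠ v := by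
        obtain ⟨a, ha⟩ := h1; obtain ⟨b, hb⟩ := h2
        by_cases h : a = v
        · exact ⟨b, fun hbv => by simp [h ▸ hbv ▸ hb] at ha⟩
        · exact ⟨a, h⟩
      obtain ⟨w⟩ := hconn.preconnected v z
      cases w with
      | nil => exact hz rfl
      | cons h p => exact hiso _ h
  · -- lower bound
    rintro n ⟨F, hFsub, hFdisc, rfl⟩
    set G' := G.deleteEdges ↑F with hG'
    have hnp : ¬ G'.Preconnected := fun h => hFdisc ⟨h⟩
    rw [Preconnected] at hnp
    push_neg at hnp
    obtain ⟨u, w, huw⟩ := hnp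
    set S : Finset V := Finset.univ.filter (fun x => G'.Reachable u x) with hS
    have huS : u ∈ S := by
      simp only [hS, mem_filter, mem_univ, true_and]
      exact Reachable.refl u
    have hwS : w ∉ S := by simp [hS, huw]
    have hbd : ∀ x y, x ∈ S → y ∉ S → G.Adj x y → s(x,y) ∈ F := by
      intro x y hx hy hadj
      by_contra hne
      apply hy
      simp only [hS, mem_filter, mem_univ, true_and] at hx ⊢
      exact hx.trans ⟨SimpleGraph.Walk.cons (by rw [deleteEdges_adj]; exact ⟨hadj, hne⟩)
        SimpleGraph.Walk.nil⟩
    by_cases hc : ∀ x ∈ S, ∃ y, y ∉ S ∧ G.Adj x y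
    · exact le_trans (G.minDegree_le_degree u)
        (le_trans (deg_le_bd G S u huS hc) (bd_card_le G F S hbd))
    · push_neg at hc
      obtain ⟨x0, hx0S, hx0⟩ := hc
      by_cases hc2 : ∀ y ∈ Sᶜ, ∃ x, x ∉ Sᶜ ∧ G.Adj y x
      · have hbd2 : ∀ x y, x ∈ Sᶜ → y ∉ Sᶜ → G.Adj x y → s(x,y) ∈ F := by
          intro x y hx hy hadj
          rw [Sym2.eq_swap]
          exact hbd y x (by simpa using hy) (by simpa using hx) hadj.symm
        refine le_trans (G.minDegree_le_degree w)
          (le_trans (deg_le_bd G Sᶜ w (by simpa using hwS) ?_) (bd_card_le G F Sᶜ hbd2))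
        exact hc2
      · exfalso
        push_neg at hc2
        obtain ⟨y0, hy0S, hy0⟩ := hc2
        have hy0S' : y0 ∉ S := by simpa using hy0S
        have hy0' : ∀ x ∈ S, ¬ G.Adj y0 x := fun x hx => hy0 x (by simpa using hx)
        by_cases hf : f x0 = f y0
        · obtain ⟨z, hz⟩ : ∃ z, f z ≠ f x0 := by
            obtain ⟨a, ha⟩ := h1; obtain ⟨b, hb⟩ := h2
            cases hfx : f x0
            · exact ⟨a, by simp [ha, hfx]⟩
            · exact ⟨b, by simp [hb, hfx]⟩
          have hzx0 : G.Adj x0 z := hjoin x0 z (fun h => hz h.symm)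
          have hzS : z ∈ S := by
            by_contra h
            exact hx0 z h hzx0
          have hzy0 : G.Adj y0 z := hjoin y0 z (fun h => hz (h.symm.trans hf.symm))
          exact hy0' z hzS hzy0
        · exact hy0' x0 hx0S (hjoin y0 x0 (fun h => hf h.symm))
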